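/- Let D = (V,E) be a directed graph with m edges, let ε > 0, let A ⊂ V with a given partition A = A1 ∪ A2, let B = V \ A, and suppose every vertex of B has total degree at most (ε²/4)·m. Then for any p ∈ [0,1] there exists a bipartition V = V1 ∪ V2 with A1 ⊆ V1 and A2 ⊆ V2 such that e(V1,V2) ≥ e(A1,A2) + (1−p)·e(A1,B) + p·e(B,A2) + p(1−p)·e(B) − εm and e(V2,V1) ≥ e(A2,A1) + p·e(A2,B) + (1−p)·e(B,A1) + p(1−p)·e(B) − εm. -/

import Mathlib

open Finset

/-- The number of directed edges from `X` to `Y`. -/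
def eCount {V : Type*} [DecidableEq V] (E : V → V → Prop) [DecidableRel E]
    (X Y : Finset V) : ℕ :=
  ((X ×ˢ Y).filter fun p => E p.1 p.2).card

/-- Outdegree of `v`. -/
def outDeg {V : Type*} [Fintype V] (E : V → V → Prop) [DecidableRel E] (v : V) : ℕ :=
  (Finset.univ.filter fun w => E v w).card

/-- Indegree of `v`. -/
def inDeg {V : Type*} [Fintype V] (E : V → V → Prop) [DecidableRel E] (v : V) : ℕ :=
  (Finset.univ.filter fun w => E w v).card

/-- Total degree of `v`. -/
def totDeg {V : Type*} [Fintype V] (E : V → V → Prop) [DecidableRel E] (v : V) : ℕ :=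
  inDeg E v + outDeg E v


namespace Stmt4Aux

variable {V : Type*} [Fintype V] [DecidableEq V]

variable {V : Type*} [DecidableEq V]

noncomputable def Wgt (p : ℝ) (U S : Finset V) : ℝ := ∏ v ∈ U, if v ∈ S then p else 1 - p

lemma Wgt_nonneg {p : ℝ} (h0 : 0 ≤ p) (h1 : p ≤ 1) (U S : Finset V) : 0 ≤ Wgt p U S :=
  Finset.prod_nonneg fun v _ => by split_ifs <;> linarith

lemma master (U : Finset V) (f g : V → ℝ) :
    ∑ S ∈ U.powerset, ∏ v ∈ U, (if v ∈ S then f v else g v) = ∏ v ∈ U, (f v + g v) := by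
  rw [Finset.prod_add]
  refine Finset.sum_congr rfl fun S hS => ?_
  rw [Finset.mem_powerset] at hS
  calc ∏ v ∈ U, (if v ∈ S then f v else g v)
      = (∏ v ∈ S, (if v ∈ S then f v else g v)) *
          ∏ v ∈ U \ S, (if v ∈ S then f v else g v) := by
        rw [← Finset.prod_union Finset.disjoint_sdiff, Finset.union_sdiff_of_subset hS]
    _ = (∏ v ∈ S, f v) * ∏ v ∈ U \ S, g v := by
        congr 1
        · exact Finset.prod_congr rfl fun v hv => if_pos hv
        · exact Finset.prod_congr rfl fun v hv => if_neg (mem_sdiff.1 hv).2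

lemma Wgt_sum (p : ℝ) (U : Finset V) : ∑ S ∈ U.powerset, Wgt p U S = 1 := by
  have h := master U (fun _ => p) (fun _ => 1 - p)
  simp only [add_sub_cancel, Finset.prod_const_one] at h
  simpa [Wgt] using h

lemma Wgt_congr (p : ℝ) (U S S' : Finset V) (h : ∀ v ∈ U, (v ∈ S ↔ v ∈ S')) :
    Wgt p U S = Wgt p U S' :=
  Finset.prod_congr rfl fun v hv => if_congr (h v hv) rfl rfl

lemma monomial (p : ℝ) (U T : Finset V) (hT : T ⊆ U) (hne : T.Nonempty) :
    ∑ S ∈ U.powerset, Wgt p U S * ∏ x ∈ T, ((if x ∈ S then (1:ℝ) else 0) - p) = 0 := by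
  have key : ∀ S ∈ U.powerset,
      Wgt p U S * ∏ x ∈ T, ((if x ∈ S then (1:ℝ) else 0) - p)
      = ∏ v ∈ U, (if v ∈ S then p * (if v ∈ T then 1 - p else 1)
          else (1 - p) * (if v ∈ T then -p else 1)) := by
    intro S hS
    have hTprod : ∏ x ∈ T, ((if x ∈ S then (1:ℝ) else 0) - p)
        = ∏ v ∈ U, (if v ∈ T then ((if v ∈ S then (1:ℝ) else 0) - p) else 1) := by
      rw [Finset.prod_ite_mem, Finset.inter_eq_right.2 hT]
    rw [hTprod, Wgt, ← Finset.prod_mul_distrib]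
    refine Finset.prod_congr rfl fun v _ => ?_
    by_cases h1 : v ∈ S <;> by_cases h2 : v ∈ T <;> simp [h1, h2] <;> ring
  rw [Finset.sum_congr rfl key, master]
  obtain ⟨x, hx⟩ := hne
  apply Finset.prod_eq_zero (hT hx)
  rw [if_pos hx, if_pos hx]; ring

noncomputable def ExU (p : ℝ) (U : Finset V) (f : Finset V → ℝ) : ℝ :=
  ∑ S ∈ U.powerset, Wgt p U S * f S

lemma ExU_congr {p : ℝ} {U : Finset V} {f g : Finset V → ℝ}
    (h : ∀ S ⊆ U, f S = g S) : ExU p U f = ExU p U g :=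
  Finset.sum_congr rfl fun S hS => by rw [h S (Finset.mem_powerset.1 hS)]

lemma ExU_const (p : ℝ) (U : Finset V) (c : ℝ) : ExU p U (fun _ => c) = c := by
  rw [ExU, ← Finset.sum_mul, Wgt_sum, one_mul]

lemma ExU_add (p : ℝ) (U : Finset V) (f g : Finset V → ℝ) :
    ExU p U (fun S => f S + g S) = ExU p U f + ExU p U g := by
  simp [ExU, mul_add, Finset.sum_add_distrib]

lemma ExU_sub (p : ℝ) (U : Finset V) (f g : Finset V → ℝ) :
    ExU p U (fun S => f S - g S) = ExU p U f - ExU p U g := by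
  simp [ExU, mul_sub, Finset.sum_sub_distrib]

lemma ExU_smul (p : ℝ) (U : Finset V) (c : ℝ) (f : Finset V → ℝ) :
    ExU p U (fun S => c * f S) = c * ExU p U f := by
  simp [ExU, Finset.mul_sum]; refine Finset.sum_congr rfl fun S _ => by ring

lemma ExU_mono {p : ℝ} (h0 : 0 ≤ p) (h1 : p ≤ 1) {U : Finset V} {f g : Finset V → ℝ}
    (h : ∀ S ⊆ U, f S ≤ g S) : ExU p U f ≤ ExU p U g :=
  Finset.sum_le_sum fun S hS => mul_le_mul_of_nonneg_left
    (h S (Finset.mem_powerset.1 hS)) (Wgt_nonneg h0 h1 U S)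

lemma ExU_union (p : ℝ) {s t : Finset V} (hd : Disjoint s t) (f : Finset V → ℝ) :
    ExU p (s ∪ t) f = ∑ S1 ∈ s.powerset, ∑ S2 ∈ t.powerset,
      Wgt p s S1 * Wgt p t S2 * f (S1 ∪ S2) := by
  rw [ExU, ← Finset.sum_product']
  refine Finset.sum_nbij' (fun S => (S ∩ s, S ∩ t)) (fun P => P.1 ∪ P.2) ?_ ?_ ?_ ?_ ?_
  · intro S hS
    simp only [Finset.mem_product, Finset.mem_powerset]
    exact ⟨inter_subset_right, inter_subset_right⟩
  · intro P hP
    simp only [Finset.mem_product, Finset.mem_powerset] at hP ⊢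
    exact union_subset_union hP.1 hP.2
  · intro S hS
    dsimp only
    rw [Finset.mem_powerset] at hS
    rw [← Finset.inter_union_distrib_left, Finset.inter_eq_left.2 hS]
  · intro P hP
    simp only [Finset.mem_product, Finset.mem_powerset] at hP
    have h1 : (P.1 ∪ P.2) ∩ s = P.1 := by
      rw [Finset.union_inter_distrib_right, Finset.inter_eq_left.2 hP.1,
        Finset.disjoint_iff_inter_eq_empty.1 (Finset.disjoint_of_subset_left hP.2 hd.symm), union_empty]
    have h2 : (P.1 ∪ P.2) ∩ t = P.2 := by
      rw [Finset.union_inter_distrib_right, Finset.inter_eq_left.2 hP.2,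
        Finset.disjoint_iff_inter_eq_empty.1 (Finset.disjoint_of_subset_left hP.1 hd), empty_union]
    exact Prod.ext h1 h2
  · intro S hS
    dsimp only
    rw [Finset.mem_powerset] at hS
    have hW : Wgt p (s ∪ t) S = Wgt p s (S ∩ s) * Wgt p t (S ∩ t) := by
      rw [Wgt, Finset.prod_union hd]
      congr 1
      · exact Wgt_congr p s S (S ∩ s) fun v hv => by simp [hv]
      · exact Wgt_congr p t S (S ∩ t) fun v hv => by simp [hv]
    rw [hW, ← Finset.inter_union_distrib_left, Finset.inter_eq_left.2 hS]

lemma ExU_sdiff (p : ℝ) {T U : Finset V} (hT : T ⊆ U) (h : Finset V → ℝ) :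
    ExU p U h = ∑ S1 ∈ T.powerset, ∑ S2 ∈ (U \ T).powerset,
      Wgt p T S1 * Wgt p (U \ T) S2 * h (S1 ∪ S2) := by
  have e1 : ExU p U h = ExU p (T ∪ U \ T) h := by
    rw [Finset.union_sdiff_of_subset hT]
  rw [e1, ExU_union p Finset.disjoint_sdiff]

lemma ExU_indep (p : ℝ) {U T1 T2 : Finset V} (h1 : T1 ⊆ U) (h2 : T2 ⊆ U)
    (hd : Disjoint T1 T2) (f g : Finset V → ℝ)
    (hf : ∀ S ⊆ U, f S = f (S ∩ T1)) (hg : ∀ S ⊆ U, g S = g (S ∩ T2)) :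
    ExU p U (fun S => f S * g S) = ExU p U f * ExU p U g := by
  have hU : U = T1 ∪ (U \ T1) := (Finset.union_sdiff_of_subset h1).symm
  have hdt : Disjoint T1 (U \ T1) := Finset.disjoint_sdiff
  have hfkey : ∀ S1 ∈ T1.powerset, ∀ S2 ∈ (U \ T1).powerset, f (S1 ∪ S2) = f S1 := by
    intro S1 hS1 S2 hS2
    rw [Finset.mem_powerset] at hS1 hS2
    have hsub : S1 ∪ S2 ⊆ U := union_subset (hS1.trans h1) (hS2.trans sdiff_subset)
    rw [hf _ hsub, Finset.union_inter_distrib_right, Finset.inter_eq_left.2 hS1,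
      Finset.disjoint_iff_inter_eq_empty.1 (Finset.disjoint_of_subset_left hS2 Finset.sdiff_disjoint), union_empty]
  have hgkey : ∀ S1 ∈ T1.powerset, ∀ S2 ∈ (U \ T1).powerset,
      g (S1 ∪ S2) = g (S2 ∩ T2) := by
    intro S1 hS1 S2 hS2
    rw [Finset.mem_powerset] at hS1 hS2
    have hsub : S1 ∪ S2 ⊆ U := union_subset (hS1.trans h1) (hS2.trans sdiff_subset)
    rw [hg _ hsub, Finset.union_inter_distrib_right,
      Finset.disjoint_iff_inter_eq_empty.1 (Finset.disjoint_of_subset_left hS1 hd), empty_union]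
  have hgkey2 : ∀ S2 ∈ (U \ T1).powerset, g S2 = g (S2 ∩ T2) := by
    intro S2 hS2
    rw [Finset.mem_powerset] at hS2
    exact hg _ (hS2.trans sdiff_subset)
  have ea : ExU p U (fun S => f S * g S)
      = (∑ S1 ∈ T1.powerset, Wgt p T1 S1 * f S1) *
        (∑ S2 ∈ (U \ T1).powerset, Wgt p (U \ T1) S2 * g (S2 ∩ T2)) := by
    rw [ExU_sdiff p h1]
    rw [Finset.sum_mul_sum]
    refine Finset.sum_congr rfl fun S1 hS1 => Finset.sum_congr rfl fun S2 hS2 => ?_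
    rw [hfkey S1 hS1 S2 hS2, hgkey S1 hS1 S2 hS2]; ring
  have eb : ExU p U f = ∑ S1 ∈ T1.powerset, Wgt p T1 S1 * f S1 := by
    rw [ExU_sdiff p h1]
    calc ∑ S1 ∈ T1.powerset, ∑ S2 ∈ (U \ T1).powerset,
          Wgt p T1 S1 * Wgt p (U \ T1) S2 * f (S1 ∪ S2)
        = ∑ S1 ∈ T1.powerset, (Wgt p T1 S1 * f S1) * ∑ S2 ∈ (U \ T1).powerset,
            Wgt p (U \ T1) S2 := by
          refine Finset.sum_congr rfl fun S1 hS1 => ?_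
          rw [Finset.mul_sum]
          refine Finset.sum_congr rfl fun S2 hS2 => by
            rw [hfkey S1 hS1 S2 hS2]; ring
      _ = _ := by
          rw [Wgt_sum]
          simp
  have ec : ExU p U g = ∑ S2 ∈ (U \ T1).powerset, Wgt p (U \ T1) S2 * g (S2 ∩ T2) := by
    rw [ExU_sdiff p h1]
    rw [Finset.sum_comm]
    calc ∑ S2 ∈ (U \ T1).powerset, ∑ S1 ∈ T1.powerset,
          Wgt p T1 S1 * Wgt p (U \ T1) S2 * g (S1 ∪ S2)
        = ∑ S2 ∈ (U \ T1).powerset, (Wgt p (U \ T1) S2 * g (S2 ∩ T2)) *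
            ∑ S1 ∈ T1.powerset, Wgt p T1 S1 := by
          refine Finset.sum_congr rfl fun S2 hS2 => ?_
          rw [Finset.mul_sum]
          refine Finset.sum_congr rfl fun S1 hS1 => by
            rw [hgkey S1 hS1 S2 hS2]; ring
      _ = _ := by
          rw [Wgt_sum]
          simp
  rw [ea, eb, ec]


variable {V : Type*} [Fintype V] [DecidableEq V]

def ES (E : V → V → Prop) [DecidableRel E] : Finset (V × V) :=
  (univ ×ˢ univ).filter fun e => E e.1 e.2

noncomputable def chi (A1 S : Finset V) (v : V) : ℝ := if v ∈ A1 ∪ S then 1 else 0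

noncomputable def qv (p : ℝ) (A1 A2 : Finset V) (v : V) : ℝ :=
  if v ∈ A1 then 1 else if v ∈ A2 then 0 else p

noncomputable def dE (p : ℝ) (A1 A2 : Finset V) (e : V × V) (S : Finset V) : ℝ :=
  chi A1 S e.1 * (1 - chi A1 S e.2) - qv p A1 A2 e.1 * (1 - qv p A1 A2 e.2)


variable (E : V → V → Prop) [DecidableRel E]

noncomputable def del (p : ℝ) (B : Finset V) (x : V) (S : Finset V) : ℝ :=
  (if x ∈ B then (1:ℝ) else 0) * ((if x ∈ S then (1:ℝ) else 0) - p)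

def flipRel (E : V → V → Prop) : V → V → Prop := fun u v => E v u

instance (E : V → V → Prop) [DecidableRel E] : DecidableRel (flipRel E) :=
  fun u v => inferInstanceAs (Decidable (E v u))

lemma eCount_univ : eCount E univ univ = (ES E).card := rfl

lemma eCount_flip (X Y : Finset V) : eCount (flipRel E) X Y = eCount E Y X := by
  rw [eCount, eCount]
  apply Finset.card_bij' (fun e _ => Prod.swap e) (fun e _ => Prod.swap e) <;>
    simp only [Finset.mem_filter, Finset.mem_product] <;> simp [flipRel] <;> tauto

lemma XR_eq (A1 S : Finset V) :
    (eCount E (A1 ∪ S) (A1 ∪ S)ᶜ : ℝ) = ∑ e ∈ ES E, chi A1 S e.1 * (1 - chi A1 S e.2) := by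
  have hset : ((A1 ∪ S) ×ˢ (A1 ∪ S)ᶜ).filter (fun e => E e.1 e.2)
      = (ES E).filter (fun e => e.1 ∈ A1 ∪ S ∧ e.2 ∉ A1 ∪ S) := by
    ext e
    simp only [ES, Finset.mem_filter, Finset.mem_product, Finset.mem_compl, Finset.mem_univ,
      true_and]
    tauto
  rw [eCount, hset, Finset.card_filter]
  push_cast
  refine Finset.sum_congr rfl fun e _ => ?_
  by_cases h1 : e.1 ∈ A1 ∪ S <;> by_cases h2 : e.2 ∈ A1 ∪ S <;>
    simp [chi, h1, h2]


lemma eCount_real (X Y : Finset V) :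
    (eCount E X Y : ℝ) = ∑ u ∈ X, ∑ v ∈ Y, (if E u v then (1:ℝ) else 0) := by
  rw [eCount, Finset.card_filter, Finset.sum_product]
  push_cast
  rfl

-- degree counting ------------------------------------------------------------

lemma card_fst (v : V) : ((ES E).filter fun e => e.1 = v).card = outDeg E v := by
  rw [outDeg]
  apply Finset.card_nbij' (fun e => e.2) (fun w => (v, w))
  · intro e he
    simp only [Finset.mem_coe, ES, Finset.mem_filter, Finset.mem_product, Finset.mem_univ, true_and] at he ⊢
    rw [← he.2]; exact he.1
  · intro w hw
    simp only [Finset.mem_coe, Finset.mem_filter, Finset.mem_univ, true_and] at hw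
    simp [ES, hw]
  · intro e he
    simp only [Finset.mem_coe, Finset.mem_filter] at he
    exact Prod.ext he.2.symm rfl
  · intro w _; rfl

lemma card_snd (v : V) : ((ES E).filter fun e => e.2 = v).card = inDeg E v := by
  rw [inDeg]
  apply Finset.card_nbij' (fun e => e.1) (fun w => (w, v))
  · intro e he
    simp only [Finset.mem_coe, ES, Finset.mem_filter, Finset.mem_product, Finset.mem_univ, true_and] at he ⊢
    rw [← he.2]; exact he.1
  · intro w hw
    simp only [Finset.mem_coe, Finset.mem_filter, Finset.mem_univ, true_and] at hw
    simp [ES, hw]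
  · intro e he
    simp only [Finset.mem_coe, Finset.mem_filter] at he
    exact Prod.ext rfl he.2.symm
  · intro w _; rfl

lemma inc_card (v : V) :
    ((ES E).filter fun e => e.1 = v ∨ e.2 = v).card ≤ totDeg E v := by
  rw [Finset.filter_or]
  calc _ ≤ ((ES E).filter fun e => e.1 = v).card + ((ES E).filter fun e => e.2 = v).card :=
        Finset.card_union_le _ _
    _ = totDeg E v := by rw [card_fst, card_snd, totDeg, Nat.add_comm]

lemma degSum : ∑ v, totDeg E v = 2 * (ES E).card := by
  have hout : ∑ v, outDeg E v = (ES E).card := by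
    rw [Finset.card_eq_sum_card_fiberwise (f := Prod.fst) (t := univ)
      (fun e _ => Finset.mem_univ _)]
    exact Finset.sum_congr rfl fun v _ => (card_fst E v).symm
  have hin : ∑ v, inDeg E v = (ES E).card := by
    rw [Finset.card_eq_sum_card_fiberwise (f := Prod.snd) (t := univ)
      (fun e _ => Finset.mem_univ _)]
    exact Finset.sum_congr rfl fun v _ => (card_snd E v).symm
  simp only [totDeg, Finset.sum_add_distrib, hout, hin]
  ring

-- partition lemmas -----------------------------------------------------------

variable {A1 A2 B : Finset V} (hA : Disjoint A1 A2) (hB : B = (A1 ∪ A2)ᶜ)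

include hA hB in
lemma loc (x : V) : (x ∈ A1 ∧ x ∉ A2 ∧ x ∉ B) ∨ (x ∉ A1 ∧ x ∈ A2 ∧ x ∉ B)
    ∨ (x ∉ A1 ∧ x ∉ A2 ∧ x ∈ B) := by
  subst hB
  by_cases h1 : x ∈ A1 <;> by_cases h2 : x ∈ A2 <;>
    simp [Finset.mem_compl, h1, h2]
  exact (Finset.disjoint_left.1 hA h1 h2).elim

include hA hB in
lemma sum_split (f : V → ℝ) : ∑ v, f v = ∑ v ∈ A1, f v + ∑ v ∈ A2, f v + ∑ v ∈ B, f v := by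
  have h1 : Disjoint (A1 ∪ A2) B := by
    subst hB; exact disjoint_compl_right
  have h2 : (univ : Finset V) = (A1 ∪ A2) ∪ B := by
    subst hB; rw [Finset.union_compl]
  rw [h2, Finset.sum_union h1, Finset.sum_union hA]

include hA hB in
lemma target_eq (p : ℝ) :
    ∑ e ∈ ES E, qv p A1 A2 e.1 * (1 - qv p A1 A2 e.2)
      = (eCount E A1 A2 : ℝ) + (1 - p) * (eCount E A1 B : ℝ)
        + p * (eCount E B A2 : ℝ) + p * (1 - p) * (eCount E B B : ℝ) := by
  have q1 : ∀ x ∈ A1, qv p A1 A2 x = 1 := fun x hx => if_pos hx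
  have q2 : ∀ x ∈ A2, qv p A1 A2 x = 0 := fun x hx => by
    rw [qv, if_neg (Finset.disjoint_right.1 hA hx), if_pos hx]
  have q3 : ∀ x ∈ B, qv p A1 A2 x = p := fun x hx => by
    rcases loc hA hB x with ⟨h, _, h3⟩ | ⟨_, h2, h3⟩ | ⟨h1, h2, _⟩
    · exact (h3 hx).elim
    · exact (h3 hx).elim
    · rw [qv, if_neg h1, if_neg h2]
  have key : ∀ (X Y : Finset V) (c1 c2 : ℝ), (∀ u ∈ X, qv p A1 A2 u = c1) →
      (∀ v ∈ Y, qv p A1 A2 v = c2) →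
      (∑ u ∈ X, ∑ v ∈ Y, (if E u v then qv p A1 A2 u * (1 - qv p A1 A2 v) else 0))
        = c1 * (1 - c2) * (eCount E X Y : ℝ) := by
    intro X Y c1 c2 hX hY
    rw [eCount_real, Finset.mul_sum]
    refine Finset.sum_congr rfl fun u hu => ?_
    rw [Finset.mul_sum]
    refine Finset.sum_congr rfl fun v hv => ?_
    rw [hX u hu, hY v hv]
    by_cases h : E u v <;> simp [h]
  have expand : ∑ e ∈ ES E, qv p A1 A2 e.1 * (1 - qv p A1 A2 e.2)
      = ∑ u, ∑ v, (if E u v then qv p A1 A2 u * (1 - qv p A1 A2 v) else 0) := by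
    rw [ES, Finset.sum_filter, Finset.sum_product]
  rw [expand, sum_split hA hB]
  have inner : ∀ X : Finset V, ∑ u ∈ X, ∑ v, (if E u v then qv p A1 A2 u * (1 - qv p A1 A2 v) else 0)
      = ∑ u ∈ X, (∑ v ∈ A1, (if E u v then qv p A1 A2 u * (1 - qv p A1 A2 v) else 0)
        + ∑ v ∈ A2, (if E u v then qv p A1 A2 u * (1 - qv p A1 A2 v) else 0)
        + ∑ v ∈ B, (if E u v then qv p A1 A2 u * (1 - qv p A1 A2 v) else 0)) :=
    fun X => Finset.sum_congr rfl fun u _ => sum_split hA hB _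
  rw [inner A1, inner A2, inner B]
  simp only [Finset.sum_add_distrib]
  rw [key A1 A1 1 1 q1 q1, key A1 A2 1 0 q1 q2, key A1 B 1 p q1 q3,
    key A2 A1 0 1 q2 q1, key A2 A2 0 0 q2 q2, key A2 B 0 p q2 q3,
    key B A1 p 1 q3 q1, key B A2 p 0 q3 q2, key B B p p q3 q3]
  ring


variable (p : ℝ)

include hA hB in
lemma chi_eq {S : Finset V} (hS : S ⊆ B) (x : V) :
    chi A1 S x = qv p A1 A2 x + del p B x S := by
  rcases loc hA hB x with ⟨h1, h2, h3⟩ | ⟨h1, h2, h3⟩ | ⟨h1, h2, h3⟩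
  · simp [chi, qv, del, h1, h2, h3, Finset.mem_union]
  · have hxS : x ∉ S := fun hx => h3 (hS hx)
    simp [chi, qv, del, h1, h2, h3, hxS, Finset.mem_union]
  · by_cases hxS : x ∈ S <;> simp [chi, qv, del, h1, h2, h3, hxS, Finset.mem_union]

lemma Ex_del (x : V) : ExU p B (del p B x) = 0 := by
  by_cases hx : x ∈ B
  · have : ExU p B (del p B x) = ∑ S ∈ B.powerset, Wgt p B S *
        ∏ y ∈ ({x} : Finset V), ((if y ∈ S then (1:ℝ) else 0) - p) := by
      refine Finset.sum_congr rfl fun S _ => ?_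
      rw [Finset.prod_singleton, del, if_pos hx, one_mul]
    rw [this, monomial p B {x} (Finset.singleton_subset_iff.2 hx) ⟨x, Finset.mem_singleton_self x⟩]
  · have : ExU p B (del p B x) = ExU p B (fun _ => 0) :=
      ExU_congr fun S _ => by rw [del, if_neg hx, zero_mul]
    rw [this, ExU_const]

lemma Ex_del_mul {x y : V} (hxy : x ≠ y) :
    ExU p B (fun S => del p B x S * del p B y S) = 0 := by
  by_cases hx : x ∈ B
  · by_cases hy : y ∈ B
    · have : ExU p B (fun S => del p B x S * del p B y S) = ∑ S ∈ B.powerset, Wgt p B S *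
          ∏ z ∈ ({x, y} : Finset V), ((if z ∈ S then (1:ℝ) else 0) - p) := by
        refine Finset.sum_congr rfl fun S _ => ?_
        rw [Finset.prod_pair hxy]
        simp [del, hx, hy]
      rw [this, monomial p B {x, y} (by simp [Finset.insert_subset_iff, hx, hy])
        ⟨x, by simp⟩]
    · have : ExU p B (fun S => del p B x S * del p B y S) = ExU p B (fun _ => 0) :=
        ExU_congr fun S _ => by simp [del, hy]
      rw [this, ExU_const]
  · have : ExU p B (fun S => del p B x S * del p B y S) = ExU p B (fun _ => 0) :=
      ExU_congr fun S _ => by simp [del, hx]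
    rw [this, ExU_const]

include hA hB in
lemma dE_decomp {e : V × V} (hne : e.1 ≠ e.2) : ∀ S ⊆ B,
    dE p A1 A2 e S = (1 - qv p A1 A2 e.2) * del p B e.1 S
      - qv p A1 A2 e.1 * del p B e.2 S - del p B e.1 S * del p B e.2 S := by
  intro S hS
  rw [dE, chi_eq hA hB p hS e.1, chi_eq hA hB p hS e.2]
  ring

include hA hB in
lemma Ex_dE {e : V × V} (hne : e.1 ≠ e.2) : ExU p B (dE p A1 A2 e) = 0 := by
  have h1 : ExU p B (dE p A1 A2 e) = ExU p B (fun S =>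
      (1 - qv p A1 A2 e.2) * del p B e.1 S - qv p A1 A2 e.1 * del p B e.2 S
        - del p B e.1 S * del p B e.2 S) :=
    ExU_congr (dE_decomp hA hB p hne)
  rw [h1, ExU_sub, ExU_sub, ExU_smul, ExU_smul, Ex_del, Ex_del, Ex_del_mul p hne]
  ring

lemma chi_restrict {S : Finset V} (hS : S ⊆ B) {T : Finset V} {x : V}
    (hx : x ∈ B → x ∈ T) : chi A1 S x = chi A1 (S ∩ T) x := by
  by_cases hxB : x ∈ B
  · have : x ∈ S ↔ x ∈ S ∩ T := by
      constructor
      · intro h; exact Finset.mem_inter.2 ⟨h, hx hxB⟩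
      · intro h; exact (Finset.mem_inter.1 h).1
    simp only [chi, Finset.mem_union, this]
  · have h1 : x ∉ S := fun h => hxB (hS h)
    have h2 : x ∉ S ∩ T := fun h => h1 (Finset.mem_inter.1 h).1
    simp [chi, Finset.mem_union, h1, h2]

lemma dE_restrict (e : V × V) : ∀ S ⊆ B,
    dE p A1 A2 e S = dE p A1 A2 e (S ∩ ({e.1, e.2} ∩ B)) := by
  intro S hS
  rw [dE, dE, chi_restrict (A1 := A1) hS (T := {e.1, e.2} ∩ B) (x := e.1) (fun h => by simp [h]),
    chi_restrict (A1 := A1) hS (T := {e.1, e.2} ∩ B) (x := e.2) (fun h => by simp [h])]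

include hA hB in
lemma Ex_dE_mul_indep {e e' : V × V} (hne : e.1 ≠ e.2) (hne' : e'.1 ≠ e'.2)
    (hsep : Disjoint ({e.1, e.2} ∩ B) ({e'.1, e'.2} ∩ B)) :
    ExU p B (fun S => dE p A1 A2 e S * dE p A1 A2 e' S) = 0 := by
  rw [ExU_indep p (Finset.inter_subset_right) (Finset.inter_subset_right) hsep
    _ _ (dE_restrict p e) (dE_restrict p e'), Ex_dE hA hB p hne, zero_mul]

lemma qv_bounds (hp0 : 0 ≤ p) (hp1 : p ≤ 1) (x : V) :
    0 ≤ qv p A1 A2 x ∧ qv p A1 A2 x ≤ 1 := by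
  rw [qv]; split_ifs <;> constructor <;> linarith

lemma dE_bounds (hp0 : 0 ≤ p) (hp1 : p ≤ 1) (e : V × V) (S : Finset V) :
    -1 ≤ dE p A1 A2 e S ∧ dE p A1 A2 e S ≤ 1 := by
  obtain ⟨hq1, hq2⟩ := qv_bounds (A1 := A1) (A2 := A2) p hp0 hp1 e.1
  obtain ⟨hq3, hq4⟩ := qv_bounds (A1 := A1) (A2 := A2) p hp0 hp1 e.2
  have hc1 : chi A1 S e.1 = 0 ∨ chi A1 S e.1 = 1 := by
    rw [chi]; split_ifs <;> simp
  have hc2 : chi A1 S e.2 = 0 ∨ chi A1 S e.2 = 1 := by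
    rw [chi]; split_ifs <;> simp
  rw [dE]
  rcases hc1 with h | h <;> rcases hc2 with h' | h' <;> rw [h, h'] <;>
    constructor <;> nlinarith


lemma ExU_sum {p : ℝ} {U : Finset V} {ι : Type*} (s : Finset ι) (F : ι → Finset V → ℝ) :
    ExU p U (fun S => ∑ x ∈ s, F x S) = ∑ x ∈ s, ExU p U (F x) := by
  calc ∑ S ∈ U.powerset, Wgt p U S * ∑ x ∈ s, F x S
      = ∑ S ∈ U.powerset, ∑ x ∈ s, Wgt p U S * F x S :=
        Finset.sum_congr rfl fun S _ => Finset.mul_sum _ _ _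
    _ = ∑ x ∈ s, ∑ S ∈ U.powerset, Wgt p U S * F x S := Finset.sum_comm
    _ = ∑ x ∈ s, ExU p U (F x) := rfl

include hA hB in
lemma decomp (hirr : ∀ v, ¬ E v v) {S : Finset V} (hS : S ⊆ B) :
    (eCount E (A1 ∪ S) (A1 ∪ S)ᶜ : ℝ)
      - ((eCount E A1 A2 : ℝ) + (1 - p) * (eCount E A1 B : ℝ)
        + p * (eCount E B A2 : ℝ) + p * (1 - p) * (eCount E B B : ℝ))
      = ∑ e ∈ ES E, dE p A1 A2 e S := by
  rw [← target_eq E hA hB p, XR_eq, ← Finset.sum_sub_distrib]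
  exact Finset.sum_congr rfl fun e _ => rfl

include hA hB in
lemma varBound (hirr : ∀ v, ¬ E v v) (ε : ℝ) (hε : 0 < ε) (m : ℕ)
    (hm : m = eCount E Finset.univ Finset.univ)
    (hdeg : ∀ v ∈ B, (totDeg E v : ℝ) ≤ ε ^ 2 / 4 * m)
    (hp0 : 0 ≤ p) (hp1 : p ≤ 1) :
    ExU p B (fun S => ((eCount E (A1 ∪ S) (A1 ∪ S)ᶜ : ℝ)
      - ((eCount E A1 A2 : ℝ) + (1 - p) * (eCount E A1 B : ℝ)
        + p * (eCount E B A2 : ℝ) + p * (1 - p) * (eCount E B B : ℝ)))^2)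
      ≤ ε ^ 2 * m ^ 2 / 2 := by
  classical
  have hne : ∀ e ∈ ES E, e.1 ≠ e.2 := by
    intro e he h
    rw [ES, Finset.mem_filter] at he
    exact hirr e.2 (h ▸ he.2)
  have step1 : ExU p B (fun S => ((eCount E (A1 ∪ S) (A1 ∪ S)ᶜ : ℝ)
      - ((eCount E A1 A2 : ℝ) + (1 - p) * (eCount E A1 B : ℝ)
        + p * (eCount E B A2 : ℝ) + p * (1 - p) * (eCount E B B : ℝ)))^2)
      = ∑ e ∈ ES E, ∑ e' ∈ ES E, ExU p B (fun S => dE p A1 A2 e S * dE p A1 A2 e' S) := by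
    have e1 : ExU p B (fun S => ((eCount E (A1 ∪ S) (A1 ∪ S)ᶜ : ℝ)
        - ((eCount E A1 A2 : ℝ) + (1 - p) * (eCount E A1 B : ℝ)
          + p * (eCount E B A2 : ℝ) + p * (1 - p) * (eCount E B B : ℝ)))^2)
        = ExU p B (fun S => ∑ e ∈ ES E, ∑ e' ∈ ES E,
            dE p A1 A2 e S * dE p A1 A2 e' S) := by
      refine ExU_congr fun S hS => ?_
      rw [decomp E hA hB p hirr hS, sq, Finset.sum_mul_sum]
    rw [e1, ExU_sum]
    exact Finset.sum_congr rfl fun e _ => ExU_sum _ _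
  rw [step1]
  have step2 : ∑ e ∈ ES E, ∑ e' ∈ ES E, ExU p B (fun S => dE p A1 A2 e S * dE p A1 A2 e' S)
      ≤ ∑ e ∈ ES E, ∑ e' ∈ ES E, (if ¬ Disjoint ({e.1, e.2} ∩ B) ({e'.1, e'.2} ∩ B)
          then (1:ℝ) else 0) := by
    refine Finset.sum_le_sum fun e he => Finset.sum_le_sum fun e' he' => ?_
    by_cases hd : Disjoint ({e.1, e.2} ∩ B) ({e'.1, e'.2} ∩ B)
    · rw [Ex_dE_mul_indep hA hB p (hne e he) (hne e' he') hd, if_neg (not_not_intro hd)]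
    · rw [if_pos hd]
      calc ExU p B (fun S => dE p A1 A2 e S * dE p A1 A2 e' S)
          ≤ ExU p B (fun _ => (1:ℝ)) := by
            refine ExU_mono hp0 hp1 fun S _ => ?_
            obtain ⟨h1, h2⟩ := dE_bounds (A1 := A1) (A2 := A2) p hp0 hp1 e S
            obtain ⟨h3, h4⟩ := dE_bounds (A1 := A1) (A2 := A2) p hp0 hp1 e' S
            nlinarith
        _ = 1 := ExU_const p B 1
  have step3 : ∑ e ∈ ES E, ∑ e' ∈ ES E, (if ¬ Disjoint ({e.1, e.2} ∩ B) ({e'.1, e'.2} ∩ B)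
        then (1:ℝ) else 0)
      = (((ES E ×ˢ ES E).filter fun pr =>
          ¬ Disjoint ({pr.1.1, pr.1.2} ∩ B) ({pr.2.1, pr.2.2} ∩ B)).card : ℝ) := by
    rw [Finset.card_filter]
    push_cast
    rw [Finset.sum_product]
  have step4 : (((ES E ×ˢ ES E).filter fun pr =>
        ¬ Disjoint ({pr.1.1, pr.1.2} ∩ B) ({pr.2.1, pr.2.2} ∩ B)).card : ℕ)
      ≤ ∑ v ∈ B, (totDeg E v) ^ 2 := by
    have hsub : ((ES E ×ˢ ES E).filter fun pr =>
        ¬ Disjoint ({pr.1.1, pr.1.2} ∩ B) ({pr.2.1, pr.2.2} ∩ B))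
        ⊆ B.biUnion fun v => ((ES E).filter fun e => e.1 = v ∨ e.2 = v) ×ˢ
            ((ES E).filter fun e => e.1 = v ∨ e.2 = v) := by
      intro pr hpr
      rw [Finset.mem_filter, Finset.mem_product] at hpr
      obtain ⟨⟨h1, h2⟩, hnd⟩ := hpr
      obtain ⟨v, hv1, hv2⟩ := Finset.not_disjoint_iff.1 hnd
      rw [Finset.mem_inter, Finset.mem_insert, Finset.mem_singleton] at hv1 hv2
      refine Finset.mem_biUnion.2 ⟨v, hv1.2, ?_⟩
      rw [Finset.mem_product, Finset.mem_filter, Finset.mem_filter]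
      exact ⟨⟨h1, by rcases hv1.1 with h | h <;> [left; right] <;> exact h.symm⟩,
        ⟨h2, by rcases hv2.1 with h | h <;> [left; right] <;> exact h.symm⟩⟩
    calc _ ≤ (B.biUnion fun v => ((ES E).filter fun e => e.1 = v ∨ e.2 = v) ×ˢ
          ((ES E).filter fun e => e.1 = v ∨ e.2 = v)).card := Finset.card_le_card hsub
      _ ≤ ∑ v ∈ B, (((ES E).filter fun e => e.1 = v ∨ e.2 = v) ×ˢ
          ((ES E).filter fun e => e.1 = v ∨ e.2 = v)).card := Finset.card_biUnion_le
      _ ≤ ∑ v ∈ B, (totDeg E v) ^ 2 := by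
        refine Finset.sum_le_sum fun v _ => ?_
        rw [Finset.card_product, sq]
        exact Nat.mul_le_mul (inc_card E v) (inc_card E v)
  have step5 : (∑ v ∈ B, ((totDeg E v : ℝ)) ^ 2) ≤ ε ^ 2 * m ^ 2 / 2 := by
    have h1 : ∀ v ∈ B, ((totDeg E v : ℝ)) ^ 2 ≤ (ε ^ 2 / 4 * m) * (totDeg E v : ℝ) := by
      intro v hv
      have := hdeg v hv
      nlinarith [Nat.cast_nonneg (α := ℝ) (totDeg E v)]
    calc ∑ v ∈ B, ((totDeg E v : ℝ)) ^ 2 ≤ ∑ v ∈ B, (ε ^ 2 / 4 * m) * (totDeg E v : ℝ) :=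
          Finset.sum_le_sum h1
      _ = (ε ^ 2 / 4 * m) * ∑ v ∈ B, (totDeg E v : ℝ) := by rw [Finset.mul_sum]
      _ ≤ (ε ^ 2 / 4 * m) * ∑ v, (totDeg E v : ℝ) := by
          refine mul_le_mul_of_nonneg_left ?_ (by positivity)
          exact Finset.sum_le_sum_of_subset_of_nonneg (Finset.subset_univ B)
            fun v _ _ => Nat.cast_nonneg _
      _ = (ε ^ 2 / 4 * m) * (2 * m) := by
          have h3 : (∑ v, totDeg E v) = 2 * m := by rw [degSum, ← eCount_univ E, ← hm]
          have h2 : (∑ v, (totDeg E v : ℝ)) = 2 * (m : ℝ) := by exact_mod_cast h3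
          rw [h2]
      _ = ε ^ 2 * m ^ 2 / 2 := by ring
  calc _ ≤ _ := step2
    _ = _ := step3
    _ ≤ (∑ v ∈ B, ((totDeg E v : ℝ)) ^ 2) := by
        calc ((((ES E ×ˢ ES E).filter fun pr =>
            ¬ Disjoint ({pr.1.1, pr.1.2} ∩ B) ({pr.2.1, pr.2.2} ∩ B)).card : ℕ) : ℝ)
            ≤ ((∑ v ∈ B, (totDeg E v) ^ 2 : ℕ) : ℝ) := Nat.cast_le.2 step4
          _ = _ := by push_cast; rfl
    _ ≤ _ := step5

lemma ineq_of_sq {x t c : ℝ} (h : (x - t) ^ 2 ≤ c ^ 2) (hc : 0 ≤ c) : x ≥ t - c := by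
  nlinarith

lemma exists_good {p : ℝ} (hp0 : 0 ≤ p) (hp1 : p ≤ 1) {U : Finset V}
    {f : Finset V → ℝ} {C : ℝ} (h : ExU p U f ≤ C) : ∃ S ⊆ U, f S ≤ C := by
  by_contra hcon
  push_neg at hcon
  have hex : ∃ S ∈ U.powerset, 0 < Wgt p U S := by
    by_contra hall
    push_neg at hall
    have : ∑ S ∈ U.powerset, Wgt p U S ≤ 0 :=
      Finset.sum_nonpos fun S hS => hall S hS
    rw [Wgt_sum] at this
    linarith
  obtain ⟨S0, hS0, hW0⟩ := hex
  have hlt : ∑ S ∈ U.powerset, Wgt p U S * C < ∑ S ∈ U.powerset, Wgt p U S * f S := by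
    refine Finset.sum_lt_sum (fun S hS => ?_) ⟨S0, hS0, ?_⟩
    · exact mul_le_mul_of_nonneg_left
        (hcon S (Finset.mem_powerset.1 hS)).le (Wgt_nonneg hp0 hp1 U S)
    · exact mul_lt_mul_of_pos_left (hcon S0 (Finset.mem_powerset.1 hS0)) hW0
  rw [← Finset.sum_mul, Wgt_sum, one_mul] at hlt
  rw [ExU] at h
  linarith


end Stmt4Aux

/-- Lemma 2.2: if every vertex of `B` has total degree at most `(ε²/4)·m`, then
for any `p ∈ [0,1]` there is a bipartition `V = V₁ ∪ V₂` extending `A₁, A₂` with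
`e(V₁,V₂) ≥ e(A₁,A₂) + (1-p)e(A₁,B) + p·e(B,A₂) + p(1-p)e(B) - εm` and
`e(V₂,V₁) ≥ e(A₂,A₁) + p·e(A₂,B) + (1-p)e(B,A₁) + p(1-p)e(B) - εm`. -/
theorem stmt4 {V : Type*} [Fintype V] [DecidableEq V]
    (E : V → V → Prop) [DecidableRel E] (hirr : ∀ v, ¬ E v v)
    (ε : ℝ) (hε : 0 < ε)
    (A1 A2 : Finset V) (hA : Disjoint A1 A2) (B : Finset V)
    (hB : B = (A1 ∪ A2)ᶜ)
    (m : ℕ) (hm : m = eCount E Finset.univ Finset.univ)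
    (hdeg : ∀ v ∈ B, (totDeg E v : ℝ) ≤ ε ^ 2 / 4 * m)
    (p : ℝ) (hp0 : 0 ≤ p) (hp1 : p ≤ 1) :
    ∃ V1 : Finset V, A1 ⊆ V1 ∧ A2 ⊆ V1ᶜ ∧
      (eCount E V1 V1ᶜ : ℝ)
        ≥ (eCount E A1 A2 : ℝ) + (1 - p) * (eCount E A1 B : ℝ)
          + p * (eCount E B A2 : ℝ) + p * (1 - p) * (eCount E B B : ℝ)
          - ε * m ∧
      (eCount E V1ᶜ V1 : ℝ)
        ≥ (eCount E A2 A1 : ℝ) + p * (eCount E A2 B : ℝ)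
          + (1 - p) * (eCount E B A1 : ℝ) + p * (1 - p) * (eCount E B B : ℝ)
          - ε * m := by
  classical
  have hirr' : ∀ v, ¬ Stmt4Aux.flipRel E v v := hirr
  have hm' : m = eCount (Stmt4Aux.flipRel E) Finset.univ Finset.univ := by
    rw [Stmt4Aux.eCount_flip]; exact hm
  have hdeg' : ∀ v ∈ B, ((totDeg (Stmt4Aux.flipRel E) v : ℝ)) ≤ ε ^ 2 / 4 * m := by
    intro v hv
    have heq : totDeg (Stmt4Aux.flipRel E) v = totDeg E v := by
      rw [totDeg, totDeg]
      have h1 : inDeg (Stmt4Aux.flipRel E) v = outDeg E v := rfl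
      have h2 : outDeg (Stmt4Aux.flipRel E) v = inDeg E v := rfl
      rw [h1, h2, Nat.add_comm]
    rw [heq]; exact hdeg v hv
  have v1 := Stmt4Aux.varBound E hA hB p hirr ε hε m hm hdeg hp0 hp1
  have v2 := Stmt4Aux.varBound (Stmt4Aux.flipRel E) hA hB p hirr' ε hε m hm' hdeg' hp0 hp1
  have hsum : Stmt4Aux.ExU p B (fun S =>
      ((eCount E (A1 ∪ S) (A1 ∪ S)ᶜ : ℝ)
        - ((eCount E A1 A2 : ℝ) + (1 - p) * (eCount E A1 B : ℝ)
          + p * (eCount E B A2 : ℝ) + p * (1 - p) * (eCount E B B : ℝ)))^2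
      + ((eCount (Stmt4Aux.flipRel E) (A1 ∪ S) (A1 ∪ S)ᶜ : ℝ)
        - ((eCount (Stmt4Aux.flipRel E) A1 A2 : ℝ)
          + (1 - p) * (eCount (Stmt4Aux.flipRel E) A1 B : ℝ)
          + p * (eCount (Stmt4Aux.flipRel E) B A2 : ℝ)
          + p * (1 - p) * (eCount (Stmt4Aux.flipRel E) B B : ℝ)))^2)
      ≤ ε ^ 2 * m ^ 2 := by
    rw [Stmt4Aux.ExU_add]
    linarith
  obtain ⟨S, hSB, hgood⟩ := Stmt4Aux.exists_good hp0 hp1 hsum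
  have hεm : 0 ≤ ε * m := mul_nonneg hε.le (Nat.cast_nonneg m)
  have hsq1 : ((eCount E (A1 ∪ S) (A1 ∪ S)ᶜ : ℝ)
      - ((eCount E A1 A2 : ℝ) + (1 - p) * (eCount E A1 B : ℝ)
        + p * (eCount E B A2 : ℝ) + p * (1 - p) * (eCount E B B : ℝ)))^2
      ≤ ε ^ 2 * m ^ 2 := by
    nlinarith [sq_nonneg ((eCount (Stmt4Aux.flipRel E) (A1 ∪ S) (A1 ∪ S)ᶜ : ℝ)
      - ((eCount (Stmt4Aux.flipRel E) A1 A2 : ℝ)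
        + (1 - p) * (eCount (Stmt4Aux.flipRel E) A1 B : ℝ)
        + p * (eCount (Stmt4Aux.flipRel E) B A2 : ℝ)
        + p * (1 - p) * (eCount (Stmt4Aux.flipRel E) B B : ℝ)))]
  have hsq2 : ((eCount (Stmt4Aux.flipRel E) (A1 ∪ S) (A1 ∪ S)ᶜ : ℝ)
      - ((eCount (Stmt4Aux.flipRel E) A1 A2 : ℝ)
        + (1 - p) * (eCount (Stmt4Aux.flipRel E) A1 B : ℝ)
        + p * (eCount (Stmt4Aux.flipRel E) B A2 : ℝ)
        + p * (1 - p) * (eCount (Stmt4Aux.flipRel E) B B : ℝ)))^2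
      ≤ ε ^ 2 * m ^ 2 := by
    nlinarith [sq_nonneg ((eCount E (A1 ∪ S) (A1 ∪ S)ᶜ : ℝ)
      - ((eCount E A1 A2 : ℝ) + (1 - p) * (eCount E A1 B : ℝ)
        + p * (eCount E B A2 : ℝ) + p * (1 - p) * (eCount E B B : ℝ)))]
  rw [Stmt4Aux.eCount_flip E (A1 ∪ S) (A1 ∪ S)ᶜ, Stmt4Aux.eCount_flip E A1 A2,
    Stmt4Aux.eCount_flip E A1 B, Stmt4Aux.eCount_flip E B A2,
    Stmt4Aux.eCount_flip E B B] at hsq2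
  refine ⟨A1 ∪ S, Finset.subset_union_left, ?_, ?_, ?_⟩
  · intro x hx
    rw [Finset.mem_compl, Finset.mem_union]
    push_neg
    refine ⟨Finset.disjoint_right.1 hA hx, fun hxS => ?_⟩
    have hxB := hSB hxS
    rw [hB, Finset.mem_compl, Finset.mem_union] at hxB
    exact hxB (Or.inr hx)
  · refine Stmt4Aux.ineq_of_sq ?_ hεm
    calc _ ≤ ε ^ 2 * m ^ 2 := hsq1
      _ = (ε * m) ^ 2 := by ring
  · refine Stmt4Aux.ineq_of_sq ?_ hεm
    have e : ((eCount E (A1 ∪ S)ᶜ (A1 ∪ S) : ℝ) - ((eCount E A2 A1 : ℝ)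
        + p * (eCount E A2 B : ℝ) + (1 - p) * (eCount E B A1 : ℝ)
        + p * (1 - p) * (eCount E B B : ℝ)))^2
        = ((eCount E (A1 ∪ S)ᶜ (A1 ∪ S) : ℝ) - ((eCount E A2 A1 : ℝ)
        + (1 - p) * (eCount E B A1 : ℝ) + p * (eCount E A2 B : ℝ)
        + p * (1 - p) * (eCount E B B : ℝ)))^2 := by ring
    rw [e]
    calc _ ≤ ε ^ 2 * m ^ 2 := hsq2
      _ = (ε * m) ^ 2 := by ring
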